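/- Let α, β ∈ (−1, 1), ε ∈ (0,1], C₁, C₂ > 0, let E be a nonnegative integrable function on [0,1], and let J be a measurable function on [0,1] with ∫₀^1 J(θ)² (1−θ)^α θ^β dθ < ∞, such that E(θ) ≤ |J(θ)| + C₁ ∫₀^θ E(η) dη + C₂ ∫₀^{εθ} E(η) dη for all θ ∈ [0,1]. Then there exists a constant C > 0, depending only on C₁ + C₂, α, β, such that (∫₀^1 E(θ)² (1−θ)^α θ^β dθ)^{1/2} ≤ C (∫₀^1 J(θ)² (1−θ)^α θ^β dθ)^{1/2}. -/

import Mathlib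

open MeasureTheory Set
open scoped ENNReal

lemma beta_half {a b : ℝ} (ha : -1 < a) (hb : -1 < b) :
    IntervalIntegrable (fun x => x ^ b * (1 - x) ^ a) volume 0 (1/2) := by
  apply (intervalIntegral.intervalIntegrable_rpow' hb).mul_continuousOn
  intro x hx
  rw [uIcc_of_le (by norm_num)] at hx
  apply ContinuousAt.continuousWithinAt
  exact ContinuousAt.rpow_const ((continuous_const.sub continuous_id).continuousAt)
    (Or.inl (by simp; linarith [hx.2]))

lemma beta_interval {a b : ℝ} (ha : -1 < a) (hb : -1 < b) :
    IntervalIntegrable (fun x => (1 - x) ^ a * x ^ b) volume 0 1 := by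
  have h1 : IntervalIntegrable (fun x => (1 - x) ^ a * x ^ b) volume 0 (1/2) := by
    simpa [mul_comm] using beta_half ha hb
  have h2 := (beta_half hb ha).comp_sub_left 1
  simp only [sub_sub_cancel] at h2
  norm_num at h2
  exact h1.trans h2.symm

lemma beta_integrableOn {a b : ℝ} (ha : -1 < a) (hb : -1 < b) :
    IntegrableOn (fun x => (1 - x) ^ a * x ^ b) (Ioo (0:ℝ) 1) := by
  have := (intervalIntegrable_iff_integrableOn_Ioc_of_le (by norm_num : (0:ℝ) ≤ 1)).1
    (beta_interval ha hb)
  exact this.mono_set Ioo_subset_Ioc_self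

lemma measurable_rpow_c (c : ℝ) : Measurable (fun x : ℝ => x ^ c) := by
  measurability

lemma measurable_one_sub_rpow (c : ℝ) : Measurable (fun x : ℝ => (1 - x) ^ c) :=
  (measurable_rpow_c c).comp (measurable_const.sub measurable_id)

lemma rpow_half_sq {x : ℝ} (hx : 0 < x) (c : ℝ) : (x ^ (c/2)) ^ 2 = x ^ c := by
  rw [sq, ← Real.rpow_add hx, add_halves]

lemma rpow_mul_rpow_neg {x : ℝ} (hx : 0 < x) (c : ℝ) : x ^ c * x ^ (-c) = 1 := by
  rw [← Real.rpow_add hx, add_neg_cancel, Real.rpow_zero]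

lemma gronwall_aux {G : ℝ → ℝ} (hGc : ContinuousOn G (Icc 0 1))
    (hG0 : ∀ θ ∈ Icc (0:ℝ) 1, 0 ≤ G θ)
    (hmono : ∀ θ ∈ Icc (0:ℝ) 1, G θ ≤ G 1)
    {S A : ℝ} (hS : 0 < S) (hA : 0 ≤ A)
    (h : ∀ θ ∈ Icc (0:ℝ) 1, G θ ≤ A + S * ∫ η in (0:ℝ)..θ, G η) :
    ∀ θ ∈ Icc (0:ℝ) 1, G θ ≤ A * Real.exp S := by
  set M := G 1 with hM
  have hM0 : 0 ≤ M := hG0 1 (by norm_num)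
  have key : ∀ n : ℕ, ∀ θ ∈ Icc (0:ℝ) 1,
      G θ ≤ A * ∑ k ∈ Finset.range n, (S*θ)^k / (Nat.factorial k) +
        M * ((S*θ)^n / (Nat.factorial n)) := by
    intro n
    induction n with
    | zero => intro θ hθ; simpa using hmono θ hθ
    | succ n ih =>
      intro θ hθ
      have hθ0 := hθ.1
      have hθ1 := hθ.2
      have hGi : IntervalIntegrable G volume 0 θ := by
        apply ContinuousOn.intervalIntegrable
        apply hGc.mono
        rw [uIcc_of_le hθ0]
        exact Icc_subset_Icc le_rfl hθ1
      have hPc : Continuous (fun η : ℝ => A * ∑ k ∈ Finset.range n, (S*η)^k / (Nat.factorial k) +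
          M * ((S*η)^n / (Nat.factorial n))) := by fun_prop
      have hstep : (∫ η in (0:ℝ)..θ, G η) ≤
          ∫ η in (0:ℝ)..θ, (A * ∑ k ∈ Finset.range n, (S*η)^k / (Nat.factorial k) +
            M * ((S*η)^n / (Nat.factorial n))) := by
        apply intervalIntegral.integral_mono_on hθ0 hGi (hPc.intervalIntegrable _ _)
        intro η hη
        exact ih η ⟨hη.1, le_trans hη.2 hθ1⟩
      have hcomp : (∫ η in (0:ℝ)..θ, (A * ∑ k ∈ Finset.range n, (S*η)^k / (Nat.factorial k) +
            M * ((S*η)^n / (Nat.factorial n)))) =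
          A * ∑ k ∈ Finset.range n, (S^k * (θ^(k+1)/(k+1)) / (Nat.factorial k)) +
            M * (S^n * (θ^(n+1)/(n+1)) / (Nat.factorial n)) := by
        have e1 : ∀ (k : ℕ), (∫ η in (0:ℝ)..θ, (S*η)^k / (Nat.factorial k)) =
            S^k * (θ^(k+1)/(k+1)) / (Nat.factorial k) := by
          intro k
          rw [intervalIntegral.integral_div]
          congr 1
          simp_rw [mul_pow]
          rw [intervalIntegral.integral_const_mul, integral_pow]
          push_cast
          ring
        rw [intervalIntegral.integral_add, intervalIntegral.integral_const_mul,
          intervalIntegral.integral_const_mul, intervalIntegral.integral_finset_sum, e1]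
        · congr 1
          congr 1
          exact Finset.sum_congr rfl fun k _ => e1 k
        · intro k _
          apply Continuous.intervalIntegrable; fun_prop
        · apply Continuous.intervalIntegrable; fun_prop
        · apply Continuous.intervalIntegrable; fun_prop
      have hfac : ∀ k : ℕ, (Nat.factorial (k+1) : ℝ) = (k+1) * Nat.factorial k := by
        intro k; rw [Nat.factorial_succ]; push_cast; ring
      have e2 : ∀ k : ℕ, S * (S^k * (θ^(k+1)/(k+1)) / (Nat.factorial k)) =
          (S*θ)^(k+1) / (Nat.factorial (k+1)) := by
        intro k
        rw [hfac k, mul_pow]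
        have h1 : (0:ℝ) < (k:ℝ) + 1 := by positivity
        have h2 : (0:ℝ) < (Nat.factorial k : ℝ) := by positivity
        field_simp
        ring
      have expand : A + S * (A * ∑ k ∈ Finset.range n, (S^k * (θ^(k+1)/(k+1)) / (Nat.factorial k)) +
            M * (S^n * (θ^(n+1)/(n+1)) / (Nat.factorial n))) =
          A * ∑ k ∈ Finset.range (n+1), (S*θ)^k / (Nat.factorial k) +
            M * ((S*θ)^(n+1) / (Nat.factorial (n+1))) := by
        have e3 : ∑ k ∈ Finset.range n, (S*θ)^(k+1) / (Nat.factorial (k+1) : ℝ) =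
            S * ∑ k ∈ Finset.range n, (S^k * (θ^(k+1)/(k+1)) / (Nat.factorial k)) := by
          rw [Finset.mul_sum]
          exact Finset.sum_congr rfl fun k _ => (e2 k).symm
        rw [Finset.sum_range_succ', e3, ← e2 n]
        simp [Nat.factorial_zero]
        ring
      calc G θ ≤ A + S * ∫ η in (0:ℝ)..θ, G η := h θ hθ
        _ ≤ A + S * (A * ∑ k ∈ Finset.range n, (S^k * (θ^(k+1)/(k+1)) / (Nat.factorial k)) +
            M * (S^n * (θ^(n+1)/(n+1)) / (Nat.factorial n))) := by
            rw [← hcomp]; nlinarith [hstep]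
        _ = _ := expand
  intro θ hθ
  have hSθ : S * θ ≤ S := by nlinarith [hθ.2]
  have hSθ0 : 0 ≤ S * θ := mul_nonneg hS.le hθ.1
  have hbd : ∀ n : ℕ, G θ ≤ A * Real.exp S + M * (S^n / (Nat.factorial n)) := by
    intro n
    refine le_trans (key n θ hθ) ?_
    apply add_le_add
    · apply mul_le_mul_of_nonneg_left _ hA
      refine le_trans ?_ (Real.sum_le_exp_of_nonneg hS.le n)
      apply Finset.sum_le_sum
      intro k _
      gcongr
    · apply mul_le_mul_of_nonneg_left _ hM0
      gcongr
  have hlim : Filter.Tendsto (fun n : ℕ => A * Real.exp S + M * (S^n / (Nat.factorial n)))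
      Filter.atTop (nhds (A * Real.exp S)) := by
    have := (FloorSemiring.tendsto_pow_div_factorial_atTop S).const_mul M
    simpa using Filter.Tendsto.const_add (A * Real.exp S) this
  exact ge_of_tendsto' hlim hbd

/-- Gronwall-type weighted `L²` bound with a proportional-delay term and Jacobi
weight `(1-θ)^α θ^β`, `α, β ∈ (-1,1)`: for every `S > 0` there is `C > 0`
depending only on `S = C₁ + C₂`, `α`, `β`, such that whenever `ε ∈ (0,1]`,
`C₁, C₂ > 0` with `C₁ + C₂ = S`, `E ≥ 0` is integrable, `J` is measurable with
finite weighted `L²` norm, and `E θ ≤ |J θ| + C₁ ∫₀^θ E + C₂ ∫₀^{εθ} E` on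
`[0,1]`, we have `‖E‖_{0,ω^{α,β,1}} ≤ C ‖J‖_{0,ω^{α,β,1}}`. -/
theorem weightedL2_bound_of_delay_gronwall (α β : ℝ)
    (hα : α ∈ Ioo (-1:ℝ) 1) (hβ : β ∈ Ioo (-1:ℝ) 1) (S : ℝ) (hS : 0 < S) :
    ∃ C > (0:ℝ), ∀ C₁ C₂ : ℝ, 0 < C₁ → 0 < C₂ → C₁ + C₂ = S →
      ∀ ε ∈ Ioc (0:ℝ) 1, ∀ E J : ℝ → ℝ,
        IntegrableOn E (Icc (0:ℝ) 1) → (∀ θ ∈ Icc (0:ℝ) 1, 0 ≤ E θ) →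
        Measurable J →
        (∫⁻ θ in Ioo (0:ℝ) 1, ENNReal.ofReal (J θ ^ 2 * (1 - θ) ^ α * θ ^ β)) < ⊤ →
        (∀ θ ∈ Icc (0:ℝ) 1, E θ ≤ |J θ| + C₁ * (∫ η in (0:ℝ)..θ, E η)
            + C₂ * ∫ η in (0:ℝ)..(ε * θ), E η) →
        (∫⁻ θ in Ioo (0:ℝ) 1, ENNReal.ofReal (E θ ^ 2 * (1 - θ) ^ α * θ ^ β)) ^ ((1:ℝ)/2)
          ≤ ENNReal.ofReal C *
            (∫⁻ θ in Ioo (0:ℝ) 1, ENNReal.ofReal (J θ ^ 2 * (1 - θ) ^ α * θ ^ β)) ^ ((1:ℝ)/2) := by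
  obtain ⟨hα1, hα2⟩ := hα
  obtain ⟨hβ1, hβ2⟩ := hβ
  have hw_int : IntegrableOn (fun θ : ℝ => (1 - θ) ^ α * θ ^ β) (Ioo (0:ℝ) 1) :=
    beta_integrableOn hα1 hβ1
  have hv_int : IntegrableOn (fun θ : ℝ => (1 - θ) ^ (-α) * θ ^ (-β)) (Ioo (0:ℝ) 1) :=
    beta_integrableOn (by linarith) (by linarith)
  set W := ∫⁻ θ in Ioo (0:ℝ) 1, ENNReal.ofReal ((1 - θ) ^ α * θ ^ β) with hWdef
  set V := ∫⁻ θ in Ioo (0:ℝ) 1, ENNReal.ofReal ((1 - θ) ^ (-α) * θ ^ (-β)) with hVdef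
  have hW : W ≠ ⊤ := hw_int.lintegral_lt_top.ne
  have hV : V ≠ ⊤ := hv_int.lintegral_lt_top.ne
  refine ⟨1 + S * Real.exp S * (V.toReal) ^ ((1:ℝ)/2) * (W.toReal) ^ ((1:ℝ)/2), by positivity, ?_⟩
  intro C₁ C₂ hC₁ hC₂ hC12 ε hε E J hEint hE0 hJm hJfin hbound
  set IJ := ∫⁻ θ in Ioo (0:ℝ) 1, ENNReal.ofReal (J θ ^ 2 * (1 - θ) ^ α * θ ^ β) with hIJdef
  set sqw : ℝ → ℝ := fun θ => (1 - θ) ^ (α/2) * θ ^ (β/2) with hsqwdef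
  have hsqw_m : Measurable sqw := (measurable_one_sub_rpow (α/2)).mul (measurable_rpow_c (β/2))
  have hsqw_nn : ∀ θ : ℝ, θ ∈ Ioo (0:ℝ) 1 → 0 ≤ sqw θ := by
    intro θ hθ
    exact mul_nonneg (Real.rpow_nonneg (by linarith [hθ.2]) _) (Real.rpow_nonneg hθ.1.le _)
  have hsqw_sq : ∀ θ : ℝ, θ ∈ Ioo (0:ℝ) 1 → sqw θ ^ 2 = (1 - θ) ^ α * θ ^ β := by
    intro θ hθ
    have h1θ : 0 < 1 - θ := by linarith [hθ.2]
    rw [hsqwdef]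
    simp only
    rw [mul_pow, rpow_half_sq h1θ, rpow_half_sq hθ.1]
  set F : ℝ → ℝ≥0∞ := fun θ => ENNReal.ofReal (|J θ| * sqw θ) with hFdef
  set Gi : ℝ → ℝ≥0∞ := fun θ => ENNReal.ofReal ((1 - θ) ^ ((-α)/2) * θ ^ ((-β)/2)) with hGidef
  have hF_m : Measurable F := (hJm.abs.mul hsqw_m).ennreal_ofReal
  have hGi_m : Measurable Gi := ((measurable_one_sub_rpow ((-α)/2)).mul (measurable_rpow_c ((-β)/2))).ennreal_ofReal
  have hFsq : (∫⁻ θ in Ioo (0:ℝ) 1, F θ ^ (2:ℝ)) = IJ := by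
    apply setLIntegral_congr_fun measurableSet_Ioo
    intro θ hθ
    show ENNReal.ofReal (|J θ| * sqw θ) ^ (2:ℝ) = ENNReal.ofReal (J θ ^ 2 * (1 - θ) ^ α * θ ^ β)
    rw [ENNReal.ofReal_rpow_of_nonneg (mul_nonneg (abs_nonneg _) (hsqw_nn θ hθ)) (by norm_num)]
    congr 1
    rw [Real.rpow_two]
    rw [mul_pow, sq_abs, hsqw_sq θ hθ]
    ring
  have hGisq : (∫⁻ θ in Ioo (0:ℝ) 1, Gi θ ^ (2:ℝ)) = V := by
    apply setLIntegral_congr_fun measurableSet_Ioo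
    intro θ hθ
    have h1θ : 0 < 1 - θ := by linarith [hθ.2]
    have hnn : 0 ≤ (1 - θ) ^ ((-α)/2) * θ ^ ((-β)/2) :=
      mul_nonneg (Real.rpow_nonneg h1θ.le _) (Real.rpow_nonneg hθ.1.le _)
    show ENNReal.ofReal ((1 - θ) ^ ((-α)/2) * θ ^ ((-β)/2)) ^ (2:ℝ) =
      ENNReal.ofReal ((1 - θ) ^ (-α) * θ ^ (-β))
    rw [ENNReal.ofReal_rpow_of_nonneg hnn (by norm_num)]
    congr 1
    rw [Real.rpow_two]
    rw [mul_pow, rpow_half_sq h1θ, rpow_half_sq hθ.1]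
  have hmul : (∫⁻ θ in Ioo (0:ℝ) 1, (F * Gi) θ) =
      ∫⁻ θ in Ioo (0:ℝ) 1, ENNReal.ofReal |J θ| := by
    apply setLIntegral_congr_fun measurableSet_Ioo
    intro θ hθ
    have h1θ : 0 < 1 - θ := by linarith [hθ.2]
    simp only [Pi.mul_apply]
    rw [← ENNReal.ofReal_mul (mul_nonneg (abs_nonneg _) (hsqw_nn θ hθ))]
    congr 1
    have : sqw θ * ((1 - θ) ^ ((-α)/2) * θ ^ ((-β)/2)) = 1 := by
      rw [hsqwdef]
      simp only
      rw [show (-α)/2 = -(α/2) by ring, show (-β)/2 = -(β/2) by ring]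
      rw [mul_mul_mul_comm, rpow_mul_rpow_neg h1θ, rpow_mul_rpow_neg hθ.1, one_mul]
    rw [mul_assoc, this, mul_one]
  have hcs : (∫⁻ θ in Ioo (0:ℝ) 1, ENNReal.ofReal |J θ|) ≤ IJ ^ ((1:ℝ)/2) * V ^ ((1:ℝ)/2) := by
    have h2 : Real.HolderConjugate 2 2 := Real.HolderConjugate.two_two
    have h := ENNReal.lintegral_mul_le_Lp_mul_Lq (volume.restrict (Ioo (0:ℝ) 1)) h2
      hF_m.aemeasurable hGi_m.aemeasurable
    rw [hmul, hFsq, hGisq] at h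
    simpa using h
  have hIJhalf_ne : IJ ^ ((1:ℝ)/2) ≠ ⊤ :=
    (ENNReal.rpow_lt_top_of_nonneg (by norm_num) hJfin.ne).ne
  have hVhalf_ne : V ^ ((1:ℝ)/2) ≠ ⊤ :=
    (ENNReal.rpow_lt_top_of_nonneg (by norm_num) hV).ne
  have hWhalf_ne : W ^ ((1:ℝ)/2) ≠ ⊤ :=
    (ENNReal.rpow_lt_top_of_nonneg (by norm_num) hW).ne
  have hprod_ne : IJ ^ ((1:ℝ)/2) * V ^ ((1:ℝ)/2) ≠ ⊤ := by
    exact (ENNReal.mul_lt_top hIJhalf_ne.lt_top hVhalf_ne.lt_top).ne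
  have hJint : IntegrableOn (fun θ => |J θ|) (Icc (0:ℝ) 1) := by
    rw [integrableOn_Icc_iff_integrableOn_Ioo]
    constructor
    · exact hJm.abs.aestronglyMeasurable
    · rw [hasFiniteIntegral_iff_ofReal (ae_of_all _ fun θ => abs_nonneg _)]
      exact lt_of_le_of_lt hcs hprod_ne.lt_top
  set A := ∫ η in (0:ℝ)..1, |J η| with hAdef
  have hA0 : 0 ≤ A := intervalIntegral.integral_nonneg (by norm_num) fun η _ => abs_nonneg _
  have hAle : A ≤ (IJ ^ ((1:ℝ)/2) * V ^ ((1:ℝ)/2)).toReal := by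
    have h1 : A = (∫⁻ θ in Ioo (0:ℝ) 1, ENNReal.ofReal |J θ|).toReal := by
      rw [hAdef, intervalIntegral.integral_of_le (by norm_num : (0:ℝ) ≤ 1),
        integral_Ioc_eq_integral_Ioo,
        integral_eq_lintegral_of_nonneg_ae (ae_of_all _ fun θ => abs_nonneg _)
          hJm.abs.aestronglyMeasurable.restrict]
    rw [h1]
    exact ENNReal.toReal_mono hprod_ne hcs
  -- interval integrability helpers
  have hEii : ∀ a b : ℝ, a ∈ Icc (0:ℝ) 1 → b ∈ Icc (0:ℝ) 1 → IntervalIntegrable E volume a b := by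
    intro a b ha hb
    rw [intervalIntegrable_iff]
    apply hEint.mono_set
    rw [uIoc]
    exact Ioc_subset_Icc_self.trans (Icc_subset_Icc (le_min ha.1 hb.1) (max_le ha.2 hb.2))
  have hJii : ∀ a b : ℝ, a ∈ Icc (0:ℝ) 1 → b ∈ Icc (0:ℝ) 1 →
      IntervalIntegrable (fun θ => |J θ|) volume a b := by
    intro a b ha hb
    rw [intervalIntegrable_iff]
    apply hJint.mono_set
    rw [uIoc]
    exact Ioc_subset_Icc_self.trans (Icc_subset_Icc (le_min ha.1 hb.1) (max_le ha.2 hb.2))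
  set G : ℝ → ℝ := fun θ => ∫ η in (0:ℝ)..θ, E η with hGdef
  have hGc : ContinuousOn G (Icc 0 1) := by
    apply (intervalIntegral.continuousOn_primitive hEint).congr
    intro x hx
    exact intervalIntegral.integral_of_le hx.1
  have hG0 : ∀ θ ∈ Icc (0:ℝ) 1, 0 ≤ G θ := by
    intro θ hθ
    exact intervalIntegral.integral_nonneg hθ.1 fun u hu => hE0 u ⟨hu.1, hu.2.trans hθ.2⟩
  have hGadd : ∀ a b : ℝ, a ∈ Icc (0:ℝ) 1 → b ∈ Icc (0:ℝ) 1 → a ≤ b →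
      G a ≤ G b := by
    intro a b ha hb hab
    have := intervalIntegral.integral_add_adjacent_intervals
      (hEii 0 a (by norm_num) ha) (hEii a b ha hb)
    have hnn : 0 ≤ ∫ η in a..b, E η :=
      intervalIntegral.integral_nonneg hab fun u hu =>
        hE0 u ⟨ha.1.trans hu.1, hu.2.trans hb.2⟩
    rw [hGdef]
    simp only
    rw [← this]
    linarith
  have hmono : ∀ θ ∈ Icc (0:ℝ) 1, G θ ≤ G 1 := fun θ hθ =>
    hGadd θ 1 hθ (by norm_num) hθ.2
  -- pointwise bound E ≤ |J| + S * G on [0,1]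
  have hptw : ∀ η ∈ Icc (0:ℝ) 1, E η ≤ |J η| + S * G η := by
    intro η hη
    have h1 := hbound η hη
    have hεη0 : 0 ≤ ε * η := mul_nonneg hε.1.le hη.1
    have hεη1 : ε * η ≤ η := by nlinarith [hε.2, hη.1]
    have hεηI : ε * η ∈ Icc (0:ℝ) 1 := ⟨hεη0, hεη1.trans hη.2⟩
    have h2 : (∫ t in (0:ℝ)..(ε*η), E t) ≤ G η := hGadd (ε*η) η hεηI hη hεη1
    have h3 : (∫ t in (0:ℝ)..η, E t) = G η := rfl
    rw [h3] at h1
    have h4 := mul_le_mul_of_nonneg_left h2 hC₂.le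
    nlinarith [hG0 η hη]
  have hkey : ∀ θ ∈ Icc (0:ℝ) 1, G θ ≤ A + S * ∫ η in (0:ℝ)..θ, G η := by
    intro θ hθ
    have hGint : IntervalIntegrable G volume 0 θ := by
      apply ContinuousOn.intervalIntegrable
      apply hGc.mono
      rw [uIcc_of_le hθ.1]
      exact Icc_subset_Icc le_rfl hθ.2
    have hRint : IntervalIntegrable (fun η => |J η| + S * G η) volume 0 θ :=
      (hJii 0 θ (by norm_num) hθ).add (hGint.const_mul S)
    have hm : G θ ≤ ∫ η in (0:ℝ)..θ, (|J η| + S * G η) := by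
      apply intervalIntegral.integral_mono_on hθ.1 (hEii 0 θ (by norm_num) hθ) hRint
      intro η hη
      exact hptw η ⟨hη.1, hη.2.trans hθ.2⟩
    rw [intervalIntegral.integral_add (hJii 0 θ (by norm_num) hθ) (hGint.const_mul S),
      intervalIntegral.integral_const_mul] at hm
    have hJA : (∫ η in (0:ℝ)..θ, |J η|) ≤ A := by
      have := intervalIntegral.integral_add_adjacent_intervals
        (hJii 0 θ (by norm_num) hθ) (hJii θ 1 hθ (by norm_num))
      have hnn : 0 ≤ ∫ η in θ..1, |J η| :=
        intervalIntegral.integral_nonneg hθ.2 fun u _ => abs_nonneg _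
      rw [hAdef, ← this]
      linarith
    linarith
  have hGr := gronwall_aux hGc hG0 hmono hS hA0 hkey
  set K := S * (A * Real.exp S) with hKdef
  have hK0 : 0 ≤ K := by positivity
  have hEbd : ∀ θ ∈ Icc (0:ℝ) 1, E θ ≤ |J θ| + K := by
    intro θ hθ
    have h1 := hptw θ hθ
    have h2 := hGr θ hθ
    nlinarith
  set Fk : ℝ → ℝ≥0∞ := fun θ => ENNReal.ofReal (K * sqw θ) with hFkdef
  have hFk_m : Measurable Fk := (hsqw_m.const_mul K).ennreal_ofReal
  have step1 : (∫⁻ θ in Ioo (0:ℝ) 1, ENNReal.ofReal (E θ ^ 2 * (1 - θ) ^ α * θ ^ β)) ≤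
      ∫⁻ θ in Ioo (0:ℝ) 1, (F + Fk) θ ^ (2:ℝ) := by
    apply setLIntegral_mono
    · exact (ENNReal.continuous_rpow_const.measurable).comp (hF_m.add hFk_m)
    intro θ hθ
    have hθI : θ ∈ Icc (0:ℝ) 1 := ⟨hθ.1.le, hθ.2.le⟩
    have hnn1 : 0 ≤ (|J θ| + K) * sqw θ :=
      mul_nonneg (by positivity) (hsqw_nn θ hθ)
    have hadd : (F + Fk) θ = ENNReal.ofReal ((|J θ| + K) * sqw θ) := by
      simp only [Pi.add_apply, hFdef, hFkdef]
      rw [← ENNReal.ofReal_add (mul_nonneg (abs_nonneg _) (hsqw_nn θ hθ))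
        (mul_nonneg hK0 (hsqw_nn θ hθ))]
      ring_nf
    rw [hadd, ENNReal.ofReal_rpow_of_nonneg hnn1 (by norm_num)]
    apply ENNReal.ofReal_le_ofReal
    rw [Real.rpow_two]
    rw [mul_pow, hsqw_sq θ hθ]
    have hsq : E θ ^ 2 ≤ (|J θ| + K) ^ 2 := by
      apply pow_le_pow_left₀ (hE0 θ hθI) (hEbd θ hθI)
    have hwnn : 0 ≤ (1 - θ) ^ α * θ ^ β :=
      mul_nonneg (Real.rpow_nonneg (by linarith [hθ.2]) _) (Real.rpow_nonneg hθ.1.le _)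
    calc E θ ^ 2 * (1 - θ) ^ α * θ ^ β = E θ ^ 2 * ((1 - θ) ^ α * θ ^ β) := by ring
      _ ≤ (|J θ| + K) ^ 2 * ((1 - θ) ^ α * θ ^ β) :=
          mul_le_mul_of_nonneg_right hsq hwnn
  have step2 : (∫⁻ θ in Ioo (0:ℝ) 1, (F + Fk) θ ^ (2:ℝ)) ^ ((1:ℝ)/2) ≤
      (∫⁻ θ in Ioo (0:ℝ) 1, F θ ^ (2:ℝ)) ^ ((1:ℝ)/2) +
      (∫⁻ θ in Ioo (0:ℝ) 1, Fk θ ^ (2:ℝ)) ^ ((1:ℝ)/2) := by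
    simpa using ENNReal.lintegral_Lp_add_le hF_m.aemeasurable hFk_m.aemeasurable
      (by norm_num : (1:ℝ) ≤ 2)
  have step3 : (∫⁻ θ in Ioo (0:ℝ) 1, Fk θ ^ (2:ℝ)) = ENNReal.ofReal (K^2) * W := by
    have : (∫⁻ θ in Ioo (0:ℝ) 1, Fk θ ^ (2:ℝ)) =
        ∫⁻ θ in Ioo (0:ℝ) 1, ENNReal.ofReal (K^2) * ENNReal.ofReal ((1 - θ) ^ α * θ ^ β) := by
      apply setLIntegral_congr_fun measurableSet_Ioo
      intro θ hθ
      show ENNReal.ofReal (K * sqw θ) ^ (2:ℝ) = _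
      rw [ENNReal.ofReal_rpow_of_nonneg (mul_nonneg hK0 (hsqw_nn θ hθ)) (by norm_num)]
      beta_reduce
      rw [← ENNReal.ofReal_mul (by positivity)]
      congr 1
      rw [Real.rpow_two]
      rw [mul_pow, hsqw_sq θ hθ]
    rw [this, lintegral_const_mul' _ _ ENNReal.ofReal_ne_top]
  have step4 : (ENNReal.ofReal (K^2) * W) ^ ((1:ℝ)/2) =
      ENNReal.ofReal K * W ^ ((1:ℝ)/2) := by
    rw [ENNReal.mul_rpow_of_nonneg _ _ (by norm_num)]
    congr 1
    rw [ENNReal.ofReal_rpow_of_nonneg (by positivity) (by norm_num)]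
    congr 1
    rw [← Real.rpow_natCast K 2, ← Real.rpow_mul hK0]
    norm_num
  have step5 : ENNReal.ofReal K ≤
      ENNReal.ofReal (S * Real.exp S) * (IJ ^ ((1:ℝ)/2) * V ^ ((1:ℝ)/2)) := by
    calc ENNReal.ofReal K ≤
        ENNReal.ofReal (S * Real.exp S * (IJ ^ ((1:ℝ)/2) * V ^ ((1:ℝ)/2)).toReal) := by
          apply ENNReal.ofReal_le_ofReal
          rw [hKdef]
          have := mul_le_mul_of_nonneg_left hAle (by positivity : (0:ℝ) ≤ S * Real.exp S)
          nlinarith [Real.exp_pos S]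
      _ = ENNReal.ofReal (S * Real.exp S) * (IJ ^ ((1:ℝ)/2) * V ^ ((1:ℝ)/2)) := by
          rw [ENNReal.ofReal_mul (by positivity), ENNReal.ofReal_toReal hprod_ne]
  -- assemble
  have main : (∫⁻ θ in Ioo (0:ℝ) 1, ENNReal.ofReal (E θ ^ 2 * (1 - θ) ^ α * θ ^ β)) ^ ((1:ℝ)/2) ≤
      IJ ^ ((1:ℝ)/2) +
        ENNReal.ofReal (S * Real.exp S) * IJ ^ ((1:ℝ)/2) * V ^ ((1:ℝ)/2) * W ^ ((1:ℝ)/2) := by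
    calc (∫⁻ θ in Ioo (0:ℝ) 1, ENNReal.ofReal (E θ ^ 2 * (1 - θ) ^ α * θ ^ β)) ^ ((1:ℝ)/2)
        ≤ (∫⁻ θ in Ioo (0:ℝ) 1, (F + Fk) θ ^ (2:ℝ)) ^ ((1:ℝ)/2) :=
          ENNReal.rpow_le_rpow step1 (by norm_num)
      _ ≤ (∫⁻ θ in Ioo (0:ℝ) 1, F θ ^ (2:ℝ)) ^ ((1:ℝ)/2) +
          (∫⁻ θ in Ioo (0:ℝ) 1, Fk θ ^ (2:ℝ)) ^ ((1:ℝ)/2) := step2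
      _ = IJ ^ ((1:ℝ)/2) + ENNReal.ofReal K * W ^ ((1:ℝ)/2) := by
          rw [hFsq, step3, step4]
      _ ≤ IJ ^ ((1:ℝ)/2) +
          ENNReal.ofReal (S * Real.exp S) * (IJ ^ ((1:ℝ)/2) * V ^ ((1:ℝ)/2)) * W ^ ((1:ℝ)/2) := by
          gcongr
      _ = IJ ^ ((1:ℝ)/2) +
          ENNReal.ofReal (S * Real.exp S) * IJ ^ ((1:ℝ)/2) * V ^ ((1:ℝ)/2) * W ^ ((1:ℝ)/2) := by
          ring
  refine main.trans ?_
  have hCof : ENNReal.ofReal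
      (1 + S * Real.exp S * (V.toReal) ^ ((1:ℝ)/2) * (W.toReal) ^ ((1:ℝ)/2)) =
      1 + ENNReal.ofReal (S * Real.exp S) * V ^ ((1:ℝ)/2) * W ^ ((1:ℝ)/2) := by
    rw [ENNReal.ofReal_add (by norm_num) (by positivity), ENNReal.ofReal_one]
    congr 1
    rw [ENNReal.ofReal_mul (by positivity), ENNReal.ofReal_mul (by positivity)]
    congr 1
    · congr 1
      rw [← ENNReal.ofReal_rpow_of_nonneg ENNReal.toReal_nonneg (by norm_num : (0:ℝ) ≤ 1/2),
        ENNReal.ofReal_toReal hV]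
    · rw [← ENNReal.ofReal_rpow_of_nonneg ENNReal.toReal_nonneg (by norm_num : (0:ℝ) ≤ 1/2),
        ENNReal.ofReal_toReal hW]
  rw [hCof]
  rw [add_mul, one_mul]
  exact le_of_eq (by ring)
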